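/- arXiv:1712.10079 — 4 statements merged into one kernel-verified Lean document; each statement's English description precedes it below -/
import Mathlib

section
/- Let 0<β<1, ℏ>0, E∈ℝ, f₀∈ℂ, and set ρ = ℏ^{−β} e^{−iβπ/2} E. Then the function f(t) = f₀ E_β(ρ t^β) satisfies f(0) = f₀, is differentiable on (0,∞), and solves the time fractional Schrödinger equation: for all t>0, ℏ^β e^{iβπ/2} · (1/Γ(1−β)) ∫_0^t f′(τ) (t−τ)^{−β} dτ = E f(t). -/
open MeasureTheory

/-- The Mittag-Leffler function `E_β(z) = ∑ zⁿ/Γ(βn+1)`. -/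
noncomputable def mittagLeffler (β : ℝ) (z : ℂ) : ℂ :=
  ∑' n : ℕ, z ^ n / (Real.Gamma (β * n + 1) : ℂ)

/-- The Caputo fractional derivative of order `β`, `0 < β < 1`. -/
noncomputable def caputoDeriv (β : ℝ) (f : ℝ → ℂ) (t : ℝ) : ℂ :=
  ((1 / Real.Gamma (1 - β) : ℝ) : ℂ) *
    ∫ τ in (0 : ℝ)..t, deriv f τ * (((t - τ) ^ (-β) : ℝ) : ℂ)

open Real Filter


lemma gammaStep {β x : ℝ} (hβ0 : 0 < β) (hβ1 : β < 1) (hx : 0 < x) :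
    x * Real.Gamma x ≤ Real.Gamma (x + β) * (x + β) ^ (1 - β) := by
  have h1 : 0 < x + β := by linarith
  have h2 : 0 < x + β + 1 := by linarith
  have key := Real.Gamma_mul_add_mul_le_rpow_Gamma_mul_rpow_Gamma h1 h2 hβ0
    (by linarith : (0:ℝ) < 1 - β) (by ring)
  have e1 : β*(x+β) + (1-β)*(x+β+1) = x + 1 := by ring
  rw [e1, Real.Gamma_add_one hx.ne'] at key
  have e2 : Real.Gamma (x+β+1) = (x+β) * Real.Gamma (x+β) := by
    have := Real.Gamma_add_one h1.ne'; linarith [this]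
  rw [e2, Real.mul_rpow h1.le (Real.Gamma_pos_of_pos h1).le] at key
  calc x * Real.Gamma x ≤ Real.Gamma (x+β) ^ β * ((x+β) ^ (1-β) * Real.Gamma (x+β) ^ (1-β)) := key
    _ = Real.Gamma (x+β) ^ (β + (1-β)) * (x+β) ^ (1-β) := by
        rw [Real.rpow_add (Real.Gamma_pos_of_pos h1)]; ring
    _ = Real.Gamma (x + β) * (x + β) ^ (1 - β) := by norm_num

lemma summableAux {β : ℝ} (hβ0 : 0 < β) (hβ1 : β < 1) {r : ℝ} (hr : 0 ≤ r) :
    Summable (fun n : ℕ => r ^ n * (n + 1) / Real.Gamma (β * n + 1)) := by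
  apply summable_of_ratio_norm_eventually_le (r := 1/2) (by norm_num)
  have htend : Tendsto (fun n : ℕ => (β * n + 1) ^ β) atTop atTop := by
    apply (tendsto_rpow_atTop hβ0).comp
    apply tendsto_atTop_add_const_right
    exact (tendsto_natCast_atTop_atTop (R := ℝ)).const_mul_atTop hβ0
  filter_upwards [htend.eventually_ge_atTop (8 * r)] with n h8
  set x : ℝ := β * n + 1 with hxdef
  have hx : 0 < x := by positivity
  have hxb0 : 0 < x + β := by linarith
  have hGx : 0 < Real.Gamma x := Real.Gamma_pos_of_pos hx
  have hGxb : 0 < Real.Gamma (x + β) := Real.Gamma_pos_of_pos hxb0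
  have hpow : 0 < (x + β) ^ (1 - β) := Real.rpow_pos_of_pos hxb0 _
  have hx1 : (1:ℝ) ≤ x := by
    have : (0:ℝ) ≤ β * n := by positivity
    linarith
  have hxnn : (0:ℝ) ≤ x ^ (1 - β) := (Real.rpow_pos_of_pos hx _).le
  have hxb : (x + β) ^ (1 - β) ≤ 2 * x ^ (1 - β) := by
    calc (x + β) ^ (1 - β) ≤ (2 * x) ^ (1 - β) := by
          apply Real.rpow_le_rpow hxb0.le (by linarith) (by linarith)
      _ = 2 ^ (1 - β) * x ^ (1 - β) := Real.mul_rpow (by norm_num) hx.le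
      _ ≤ 2 * x ^ (1 - β) := by
          have : (2:ℝ) ^ (1 - β) ≤ 2 ^ (1:ℝ) :=
            Real.rpow_le_rpow_of_exponent_le (by norm_num) (by linarith)
          rw [Real.rpow_one] at this
          exact mul_le_mul_of_nonneg_right this hxnn
  have P : r * (n + 2) * (x + β) ^ (1 - β) ≤ 1/2 * (n + 1) * x := by
    have h1 : r * (n + 2) * (x + β) ^ (1 - β) ≤ r * (2 * (n + 1)) * (2 * x ^ (1 - β)) := by
      have hn2 : (n:ℝ) + 2 ≤ 2 * (n + 1) := by push_cast; linarith [Nat.cast_nonneg (α := ℝ) n]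
      have := mul_le_mul (mul_le_mul_of_nonneg_left hn2 hr) hxb hpow.le (by positivity)
      linarith [this]
    have h2 : r * (2 * (n + 1)) * (2 * x ^ (1 - β)) = (n + 1) / 2 * (8 * r * x ^ (1 - β)) := by ring
    have h3 : 8 * r * x ^ (1 - β) ≤ x := by
      calc 8 * r * x ^ (1 - β) ≤ x ^ β * x ^ (1 - β) := by
            exact mul_le_mul_of_nonneg_right h8 hxnn
        _ = x := by rw [← Real.rpow_add hx, show β + (1-β) = 1 by ring, Real.rpow_one]
    have hn1 : (0:ℝ) ≤ (n:ℝ) + 1 := by positivity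
    calc r * (n + 2) * (x + β) ^ (1 - β) ≤ (n + 1) / 2 * (8 * r * x ^ (1 - β)) := by
          rw [← h2]; exact h1
      _ ≤ (n + 1) / 2 * x := by
          exact mul_le_mul_of_nonneg_left h3 (by positivity)
      _ = 1/2 * (n + 1) * x := by ring
  have hgoal : r ^ (n+1) * ((n:ℝ) + 1 + 1) / Real.Gamma (x + β)
      ≤ 1/2 * (r ^ n * ((n:ℝ) + 1) / Real.Gamma x) := by
    rw [mul_div_assoc', div_le_div_iff₀ hGxb hGx, ← mul_le_mul_iff_of_pos_right hpow]
    have hg := gammaStep hβ0 hβ1 hx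
    calc r ^ (n+1) * ((n:ℝ) + 1 + 1) * Real.Gamma x * (x + β) ^ (1 - β)
        = r ^ n * Real.Gamma x * (r * ((n:ℝ) + 2) * (x + β) ^ (1 - β)) := by ring
      _ ≤ r ^ n * Real.Gamma x * (1/2 * ((n:ℝ) + 1) * x) := by
          exact mul_le_mul_of_nonneg_left P (by positivity)
      _ = 1/2 * (r ^ n * ((n:ℝ) + 1)) * (x * Real.Gamma x) := by ring
      _ ≤ 1/2 * (r ^ n * ((n:ℝ) + 1)) * (Real.Gamma (x + β) * (x + β) ^ (1 - β)) := by
          apply mul_le_mul_of_nonneg_left hg (by positivity)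
      _ = 1/2 * (r ^ n * ((n:ℝ) + 1)) * Real.Gamma (x + β) * (x + β) ^ (1 - β) := by ring
  have hnorm : ∀ m : ℕ, ‖r ^ m * ((m:ℝ) + 1) / Real.Gamma (β * m + 1)‖
      = r ^ m * ((m:ℝ) + 1) / Real.Gamma (β * m + 1) := by
    intro m
    have : 0 < Real.Gamma (β * m + 1) := Real.Gamma_pos_of_pos (by positivity)
    rw [Real.norm_eq_abs, abs_of_nonneg (by positivity)]
  rw [hnorm, hnorm]
  have hexp : β * ((n:ℕ) + 1 : ℕ) + 1 = x + β := by push_cast; ring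
  rw [hexp]
  push_cast
  convert hgoal using 3


lemma betaIntegrableLeft {a b t : ℝ} (ha : 0 < a) (ht : 0 < t) :
    IntervalIntegrable (fun τ : ℝ => τ ^ (a-1) * (t - τ) ^ (b-1)) volume 0 (t/2) := by
  apply IntervalIntegrable.mul_continuousOn
  · exact intervalIntegral.intervalIntegrable_rpow' (by linarith)
  · apply continuousOn_of_forall_continuousAt
    intro τ hτ
    rw [Set.uIcc_of_le (by linarith : (0:ℝ) ≤ t/2)] at hτ
    have hne : t - τ ≠ 0 := by
      have := hτ.2; simp only [Set.mem_Icc] at hτ; intro h; linarith [hτ.2]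
    exact (Real.continuousAt_rpow_const _ _ (Or.inl hne)).comp
      ((continuous_const.sub continuous_id).continuousAt)

lemma betaIntegrable {a b t : ℝ} (ha : 0 < a) (hb : 0 < b) (ht : 0 < t) :
    IntervalIntegrable (fun τ : ℝ => τ ^ (a-1) * (t - τ) ^ (b-1)) volume 0 t := by
  refine (betaIntegrableLeft ha ht).trans ?_
  have h2 := (betaIntegrableLeft (a := b) (b := a) hb ht).comp_sub_left t
  have e : ∀ τ : ℝ, (t - τ) ^ (b-1) * (t - (t - τ)) ^ (a-1) = τ ^ (a-1) * (t - τ) ^ (b-1) := by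
    intro τ; rw [sub_sub_cancel]; ring
  simp only [e] at h2
  have : t - t/2 = t/2 := by ring
  rw [this, sub_zero] at h2
  exact h2.symm

lemma betaValue {a b t : ℝ} (ha : 0 < a) (hb : 0 < b) (ht : 0 < t) :
    ∫ τ in (0:ℝ)..t, τ ^ (a-1) * (t - τ) ^ (b-1)
      = t ^ (a+b-1) * (Real.Gamma a * Real.Gamma b / Real.Gamma (a+b)) := by
  have key := Complex.betaIntegral_scaled (a : ℂ) (b : ℂ) ht
  have hab : (0:ℝ) < a + b := by linarith
  have hGne : Complex.Gamma ((a:ℂ) + b) ≠ 0 := by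
    rw [← Complex.ofReal_add, Complex.Gamma_ofReal]
    exact_mod_cast (Real.Gamma_pos_of_pos hab).ne'
  have hB : Complex.betaIntegral a b
      = Complex.Gamma a * Complex.Gamma b / Complex.Gamma ((a:ℂ)+b) := by
    have h := Complex.Gamma_mul_Gamma_eq_betaIntegral
      (by simpa using ha : 0 < Complex.re a) (by simpa using hb : 0 < Complex.re b)
    field_simp [h]
    linear_combination -h
  rw [hB] at key
  have hcongr : (∫ τ in (0:ℝ)..t, ((τ ^ (a-1) * (t - τ) ^ (b-1) : ℝ) : ℂ))
      = ∫ τ in (0:ℝ)..t, (τ:ℂ) ^ ((a:ℂ) - 1) * ((t:ℂ) - τ) ^ ((b:ℂ) - 1) := by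
    apply intervalIntegral.integral_congr
    intro τ hτ
    rw [Set.uIcc_of_le ht.le, Set.mem_Icc] at hτ
    push_cast
    rw [Complex.ofReal_cpow hτ.1, Complex.ofReal_cpow (by linarith [hτ.2] : (0:ℝ) ≤ t - τ)]
    push_cast; ring
  apply Complex.ofReal_injective
  rw [show ((∫ τ in (0:ℝ)..t, τ ^ (a-1) * (t - τ) ^ (b-1) : ℝ) : ℂ)
      = ∫ τ in (0:ℝ)..t, ((τ ^ (a-1) * (t - τ) ^ (b-1) : ℝ) : ℂ) from
      intervalIntegral.integral_ofReal.symm, hcongr, key,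
    Complex.Gamma_ofReal, Complex.Gamma_ofReal, ← Complex.ofReal_add, Complex.Gamma_ofReal,
    show (((a+b:ℝ):ℂ) - 1) = ((a+b-1 : ℝ) : ℂ) by push_cast; ring,
    ← Complex.ofReal_cpow ht.le]
  push_cast
  ring


noncomputable def mlTerm (β : ℝ) (ρ : ℂ) (n : ℕ) (s : ℝ) : ℂ :=
  ρ^n / (Real.Gamma (β*n+1) : ℂ) * ((s ^ (β*n) : ℝ) : ℂ)

noncomputable def mlDTerm (β : ℝ) (ρ : ℂ) (n : ℕ) (s : ℝ) : ℂ :=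
  ρ^n / (Real.Gamma (β*n+1) : ℂ) * (((β*n) : ℝ) : ℂ) * ((s ^ (β*n-1) : ℝ) : ℂ)


lemma norm_coef {β : ℝ} (hβ0 : 0 < β) (ρ : ℂ) (n : ℕ) :
    ‖ρ^n / (Real.Gamma (β*n+1) : ℂ)‖ = ‖ρ‖^n / Real.Gamma (β*n+1) := by
  have hG : 0 < Real.Gamma (β*n+1) := Real.Gamma_pos_of_pos (by positivity)
  rw [norm_div, norm_pow, Complex.norm_real, Real.norm_eq_abs, abs_of_pos hG]

lemma rpow_mul_nat {s β : ℝ} (hs : 0 ≤ s) (n : ℕ) : s ^ (β * n) = (s ^ β) ^ n := by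
  rw [Real.rpow_mul hs, Real.rpow_natCast]

lemma summable_mlTerm {β : ℝ} (hβ0 : 0 < β) (hβ1 : β < 1) (ρ : ℂ) {s : ℝ} (hs : 0 ≤ s) :
    Summable (fun n => mlTerm β ρ n s) := by
  apply Summable.of_norm
  apply Summable.of_nonneg_of_le (fun n => norm_nonneg _) ?_
    (summableAux hβ0 hβ1 (r := ‖ρ‖ * s^β) (by positivity))
  intro n
  have hG : 0 < Real.Gamma (β*n+1) := Real.Gamma_pos_of_pos (by positivity)
  have hsp : (0:ℝ) ≤ s ^ (β*n) := Real.rpow_nonneg hs _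
  rw [mlTerm, norm_mul, norm_coef hβ0, Complex.norm_real, Real.norm_eq_abs, abs_of_nonneg hsp]
  have e : ‖ρ‖^n / Real.Gamma (β*n+1) * s^(β*n)
      = (‖ρ‖*s^β)^n * 1 / Real.Gamma (β*n+1) := by
    rw [mul_pow, ← rpow_mul_nat hs]; ring
  rw [e]
  gcongr
  all_goals first
    | positivity
    | (have h0 : (0:ℝ) ≤ (n:ℝ) := Nat.cast_nonneg n; linarith)

lemma summable_mlDTerm_bound {β : ℝ} (hβ0 : 0 < β) (hβ1 : β < 1) (ρ : ℂ) {c d : ℝ}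
    (hc : 0 < c) (hd : 0 < d) :
    Summable (fun n : ℕ => ‖ρ^n / (Real.Gamma (β*n+1) : ℂ)‖ * (β*n) * d^(β*n) * c⁻¹) := by
  apply Summable.of_nonneg_of_le
    (fun n => by positivity)
    ?_ (((summableAux hβ0 hβ1 (r := ‖ρ‖ * d^β) (by positivity)).mul_left (β * c⁻¹)))
  intro n
  have hG : 0 < Real.Gamma (β*n+1) := Real.Gamma_pos_of_pos (by positivity)
  rw [norm_coef hβ0, rpow_mul_nat hd.le]
  have : ‖ρ‖^n / Real.Gamma (β*n+1) * (β*n) * (d^β)^n * c⁻¹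
      = β * c⁻¹ * ((‖ρ‖ * d^β)^n * n / Real.Gamma (β*n+1)) := by
    rw [mul_pow]; field_simp
  rw [this]
  apply mul_le_mul_of_nonneg_left ?_ (by positivity)
  gcongr
  all_goals first
    | positivity
    | (have h0 : (0:ℝ) ≤ (n:ℝ) := Nat.cast_nonneg n; linarith)

lemma hasDerivAt_mlSum {β : ℝ} (hβ0 : 0 < β) (hβ1 : β < 1) (ρ : ℂ) {t : ℝ} (ht : 0 < t) :
    HasDerivAt (fun s => ∑' n, mlTerm β ρ n s) (∑' n, mlDTerm β ρ n t) t := by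
  have hmem : t ∈ Set.Ioo (t/2) (t+1) := by constructor <;> linarith
  apply hasDerivAt_tsum_of_isPreconnected
    (u := fun n : ℕ => ‖ρ^n / (Real.Gamma (β*n+1) : ℂ)‖ * (β*n) * (t+1)^(β*n) * (t/2)⁻¹)
    (summable_mlDTerm_bound hβ0 hβ1 ρ (by linarith : (0:ℝ) < t/2) (by linarith : (0:ℝ) < t+1))
    isOpen_Ioo ((convex_Ioo _ _).isPreconnected)
    ?_ ?_ hmem (summable_mlTerm hβ0 hβ1 ρ ht.le) hmem
  · intro n y hy
    have hy0 : 0 < y := lt_trans (by linarith : (0:ℝ) < t/2) hy.1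
    have h := (Real.hasDerivAt_rpow_const (x := y) (p := β*n) (Or.inl hy0.ne')).ofReal_comp
    have h2 := h.const_mul (ρ^n / (Real.Gamma (β*n+1) : ℂ))
    convert h2 using 1
    · rfl
    · rfl
    rw [mlDTerm]
    push_cast
    ring
  · intro n y hy
    have hy0 : 0 < y := lt_trans (by linarith : (0:ℝ) < t/2) hy.1
    have hrn : (0:ℝ) ≤ y ^ (β*n-1) := Real.rpow_nonneg hy0.le _
    rw [mlDTerm, norm_mul, norm_mul, Complex.norm_real, Complex.norm_real, Real.norm_eq_abs,
      Real.norm_eq_abs, abs_of_nonneg (by positivity : (0:ℝ) ≤ β*(n:ℝ)), abs_of_nonneg hrn]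
    rw [Real.rpow_sub hy0, Real.rpow_one]
    have h1 : y ^ (β*n) ≤ (t+1)^(β*n) :=
      Real.rpow_le_rpow hy0.le (by linarith [hy.2]) (by positivity)
    have h2 : y⁻¹ ≤ (t/2)⁻¹ := by
      apply inv_anti₀ (by linarith) (le_of_lt hy.1)
    calc ‖ρ^n / (Real.Gamma (β*n+1) : ℂ)‖ * (β*n) * (y ^ (β*n) / y)
        = ‖ρ^n / (Real.Gamma (β*n+1) : ℂ)‖ * (β*n) * (y ^ (β*n) * y⁻¹) := by
          ring
      _ ≤ ‖ρ^n / (Real.Gamma (β*n+1) : ℂ)‖ * (β*n) * ((t+1) ^ (β*n) * (t/2)⁻¹) := by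
          apply mul_le_mul_of_nonneg_left ?_ (by positivity)
          exact mul_le_mul h1 h2 (by positivity) (by positivity)
      _ = ‖ρ^n / (Real.Gamma (β*n+1) : ℂ)‖ * (β*n) * (t+1) ^ (β*n) * (t/2)⁻¹ := by ring


lemma mittagLeffler_eq (β : ℝ) (ρ : ℂ) {s : ℝ} (hs : 0 ≤ s) :
    mittagLeffler β (ρ * ((s ^ β : ℝ) : ℂ)) = ∑' n, mlTerm β ρ n s := by
  unfold mittagLeffler mlTerm
  apply tsum_congr; intro n
  rw [mul_pow, rpow_mul_nat hs]
  push_cast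
  ring

lemma hasDerivAt_f {β : ℝ} (hβ0 : 0 < β) (hβ1 : β < 1) (ρ f₀ : ℂ) {t : ℝ} (ht : 0 < t) :
    HasDerivAt (fun s : ℝ => f₀ * mittagLeffler β (ρ * ((s ^ β : ℝ) : ℂ)))
      (f₀ * ∑' n, mlDTerm β ρ n t) t := by
  have h := (hasDerivAt_mlSum hβ0 hβ1 ρ ht).const_mul f₀
  apply h.congr_of_eventuallyEq
  filter_upwards [Ioi_mem_nhds ht] with s hs
  rw [mittagLeffler_eq β ρ (le_of_lt hs)]

lemma setint_ofReal {s : Set ℝ} (g : ℝ → ℝ) :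
    (∫ τ in s, ((g τ : ℝ) : ℂ)) = ((∫ τ in s, g τ : ℝ) : ℂ) :=
  integral_ofReal

lemma int_norm_eq {s : Set ℝ} (hs : MeasurableSet s) (K : ℂ) {g : ℝ → ℝ}
    (hg : ∀ x ∈ s, 0 ≤ g x) :
    ∫ τ in s, ‖K * ((g τ : ℝ) : ℂ)‖ = ‖∫ τ in s, K * ((g τ : ℝ) : ℂ)‖ := by
  have h1 : (∫ τ in s, K * ((g τ : ℝ) : ℂ)) = K * ((∫ τ in s, g τ : ℝ) : ℂ) := by
    rw [MeasureTheory.integral_const_mul, setint_ofReal]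
  have hgnn : 0 ≤ ∫ τ in s, g τ := setIntegral_nonneg hs hg
  rw [h1, norm_mul, Complex.norm_real, Real.norm_eq_abs, abs_of_nonneg hgnn]
  calc (∫ τ in s, ‖K * ((g τ : ℝ) : ℂ)‖)
      = ∫ τ in s, ‖K‖ * g τ := by
        apply setIntegral_congr_fun hs
        intro τ hτ
        show ‖K * ((g τ : ℝ) : ℂ)‖ = ‖K‖ * g τ
        rw [norm_mul, Complex.norm_real, Real.norm_eq_abs, abs_of_nonneg (hg τ hτ)]
    _ = ‖K‖ * ∫ τ in s, g τ := MeasureTheory.integral_const_mul _ _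

lemma caputo_eq {β : ℝ} (hβ0 : 0 < β) (hβ1 : β < 1) (ρ f₀ : ℂ) {t : ℝ} (ht : 0 < t) :
    caputoDeriv β (fun s : ℝ => f₀ * mittagLeffler β (ρ * ((s ^ β : ℝ) : ℂ))) t
      = ρ * (f₀ * mittagLeffler β (ρ * ((t ^ β : ℝ) : ℂ))) := by
  have hb : (0:ℝ) < 1 - β := by linarith
  have hGb : 0 < Real.Gamma (1-β) := Real.Gamma_pos_of_pos hb
  set K : ℕ → ℂ := fun n => f₀ * (ρ^n / (Real.Gamma (β*n+1) : ℂ)) * (((β*n : ℝ)) : ℂ) with hK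
  set F : ℕ → ℝ → ℂ := fun n τ => K n * ((τ ^ (β*n-1) * (t-τ) ^ (-β) : ℝ) : ℂ) with hF
  have hF0 : F 0 = fun _ => 0 := by
    funext τ; simp [hF, hK]
  have hexp1 : ∀ m : ℕ, (1-β)-1 = -β := fun _ => by ring
  have hFint : ∀ n, Integrable (F n) (volume.restrict (Set.Ioc 0 t)) := by
    intro n
    match n with
    | 0 => rw [hF0]; exact integrable_zero _ _ _
    | (m+1) =>
      have ha : 0 < β * ((m:ℝ)+1) := by positivity
      have hreal := (betaIntegrable ha hb ht).1
      rw [show (1-β)-1 = -β from by ring] at hreal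
      have : IntegrableOn (fun τ : ℝ => τ ^ (β*((m+1:ℕ):ℝ)-1) * (t-τ) ^ (-β))
          (Set.Ioc 0 t) volume := by
        convert hreal using 3
        case e'_6 => push_cast; ring
        all_goals rfl
      exact (this.ofReal.const_mul (K (m+1)))
  have hbetaval : ∀ m : ℕ, (∫ τ in Set.Ioc 0 t, τ ^ (β*((m+1:ℕ):ℝ)-1) * (t-τ) ^ (-β))
      = t ^ (β*((m:ℝ)+1)-β)
        * (Real.Gamma (β*((m:ℝ)+1)) * Real.Gamma (1-β) / Real.Gamma (β*(m:ℝ)+1)) := by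
    intro m
    have ha : 0 < β * ((m:ℝ)+1) := by positivity
    have hv := betaValue ha hb ht
    rw [show (1-β)-1 = -β from by ring,
      show β*((m:ℝ)+1)+(1-β)-1 = β*((m:ℝ)+1)-β from by ring,
      show β*((m:ℝ)+1)+(1-β) = β*(m:ℝ)+1 from by ring,
      intervalIntegral.integral_of_le ht.le] at hv
    rw [show (β*((m+1:ℕ):ℝ)-1) = β*((m:ℝ)+1)-1 from by push_cast; ring]
    exact hv
  have hFval : ∀ m : ℕ, (∫ τ in Set.Ioc 0 t, F (m+1) τ)
      = (f₀ * (Real.Gamma (1-β) : ℂ) * ρ) * mlTerm β ρ m t := by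
    intro m
    have ha : 0 < β * ((m:ℝ)+1) := by positivity
    have hGm1 : Real.Gamma (β*((m+1:ℕ):ℝ)+1) = β*((m:ℝ)+1) * Real.Gamma (β*((m:ℝ)+1)) := by
      rw [show (β*((m+1:ℕ):ℝ)+1) = β*((m:ℝ)+1)+1 from by push_cast; ring]
      exact Real.Gamma_add_one ha.ne'
    have hGmne : Real.Gamma (β*(m:ℝ)+1) ≠ 0 := (Real.Gamma_pos_of_pos (by positivity)).ne'
    have hGamne : Real.Gamma (β*((m:ℝ)+1)) ≠ 0 := (Real.Gamma_pos_of_pos ha).ne'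
    rw [hF]
    simp only []
    rw [MeasureTheory.integral_const_mul]
    rw [setint_ofReal, hbetaval m]
    simp only [hK, mlTerm]
    rw [hGm1]
    push_cast
    rw [show β*((m:ℝ)+1)-β = β*(m:ℝ) from by ring]
    have hβne : (β:ℂ) * (((m:ℕ):ℂ)+1) ≠ 0 := by exact_mod_cast ha.ne'
    have h1 : (Real.Gamma (β*((m:ℝ)+1)) : ℂ) ≠ 0 := by exact_mod_cast hGamne
    have h2 : (Real.Gamma (β*(m:ℝ)+1) : ℂ) ≠ 0 := by exact_mod_cast hGmne
    have hβc : (β:ℂ) ≠ 0 := by exact_mod_cast hβ0.ne'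
    field_simp [h1, h2, hβne, hβc]
    ring
  have hFsum : Summable (fun n => ∫ τ in Set.Ioc 0 t, ‖F n τ‖) := by
    rw [← summable_nat_add_iff 1]
    have hkey : (fun m : ℕ => ∫ τ in Set.Ioc 0 t, ‖F (m+1) τ‖)
        = fun m : ℕ => ‖(f₀ * (Real.Gamma (1-β) : ℂ) * ρ) * mlTerm β ρ m t‖ := by
      funext m
      simp only [hF]
      rw [int_norm_eq measurableSet_Ioc (K (m+1))
        (fun τ hτ => mul_nonneg (Real.rpow_nonneg hτ.1.le _)
          (Real.rpow_nonneg (by linarith [hτ.2] : (0:ℝ) ≤ t - τ) _))]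
      rw [show (∫ τ in Set.Ioc 0 t, K (m+1) * ((τ ^ (β*((m+1:ℕ):ℝ)-1) * (t-τ) ^ (-β) : ℝ) : ℂ))
          = ∫ τ in Set.Ioc 0 t, F (m+1) τ from rfl, hFval m]
    rw [hkey]
    exact (summable_norm_iff.mpr ((summable_mlTerm hβ0 hβ1 ρ ht.le).mul_left _))
  have hswap := hasSum_integral_of_summable_integral_norm hFint hFsum
  rw [caputoDeriv, intervalIntegral.integral_of_le ht.le]
  have hinteq : (∫ τ in Set.Ioc 0 t,
        deriv (fun s : ℝ => f₀ * mittagLeffler β (ρ * ((s ^ β : ℝ) : ℂ))) τ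
          * (((t - τ) ^ (-β) : ℝ) : ℂ))
      = ∫ τ in Set.Ioc 0 t, ∑' n, F n τ := by
    apply setIntegral_congr_fun measurableSet_Ioc
    intro τ hτ
    dsimp only
    rw [(hasDerivAt_f hβ0 hβ1 ρ f₀ hτ.1).deriv]
    rw [← tsum_mul_left, ← tsum_mul_right]
    apply tsum_congr; intro n
    rw [hF, hK, mlDTerm]
    push_cast
    ring
  rw [hinteq, ← hswap.tsum_eq, Summable.tsum_eq_zero_add hswap.summable]
  rw [show (∫ τ in Set.Ioc 0 t, F 0 τ) = 0 from by rw [hF0]; simp]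
  rw [show (fun m : ℕ => ∫ τ in Set.Ioc 0 t, F (m+1) τ)
      = fun m : ℕ => (f₀ * (Real.Gamma (1-β) : ℂ) * ρ) * mlTerm β ρ m t from funext hFval]
  rw [tsum_mul_left, ← mittagLeffler_eq β ρ ht.le]
  have : (Real.Gamma (1-β) : ℂ) ≠ 0 := by exact_mod_cast hGb.ne'
  push_cast
  field_simp
  ring


theorem mittagLeffler_solves_time_fractional_schrodinger
    (β hbar E : ℝ) (f₀ : ℂ) (hβ0 : 0 < β) (hβ1 : β < 1) (hh : 0 < hbar) :
    let ρ : ℂ := ((hbar ^ (-β) : ℝ) : ℂ) *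
      Complex.exp (-(Complex.I * (β : ℂ) * (Real.pi : ℂ) / 2)) * (E : ℂ)
    let f : ℝ → ℂ := fun t => f₀ * mittagLeffler β (ρ * ((t ^ β : ℝ) : ℂ))
    f 0 = f₀ ∧
    (∀ t ∈ Set.Ioi (0 : ℝ), DifferentiableAt ℝ f t) ∧
    (∀ t ∈ Set.Ioi (0 : ℝ),
      ((hbar ^ β : ℝ) : ℂ) * Complex.exp (Complex.I * (β : ℂ) * (Real.pi : ℂ) / 2) *
        caputoDeriv β f t = (E : ℂ) * f t) := by
  intro ρ f
  refine ⟨?_, ?_, ?_⟩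
  · show f₀ * mittagLeffler β (ρ * (((0:ℝ) ^ β : ℝ) : ℂ)) = f₀
    rw [Real.zero_rpow hβ0.ne']
    have hml : mittagLeffler β (ρ * (((0:ℝ)) : ℂ)) = 1 := by
      rw [Complex.ofReal_zero, mul_zero]
      unfold mittagLeffler
      rw [tsum_eq_single 0 ?_]
      · norm_num [Real.Gamma_one]
      · intro n hn
        rw [zero_pow hn, zero_div]
    rw [hml, mul_one]
  · intro t htpos
    exact (hasDerivAt_f hβ0 hβ1 ρ f₀ (Set.mem_Ioi.mp htpos)).differentiableAt
  · intro t htpos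
    have ht : 0 < t := Set.mem_Ioi.mp htpos
    have hc : caputoDeriv β f t = ρ * f t := caputo_eq hβ0 hβ1 ρ f₀ ht
    rw [hc]
    have hρ : ρ = ((hbar ^ (-β) : ℝ) : ℂ) *
        Complex.exp (-(Complex.I * (β : ℂ) * (Real.pi : ℂ) / 2)) * (E : ℂ) := rfl
    rw [hρ]
    have h1 : ((hbar ^ β : ℝ) : ℂ) * ((hbar ^ (-β) : ℝ) : ℂ) = 1 := by
      rw [← Complex.ofReal_mul, ← Real.rpow_add hh]
      norm_num
    have h2 : Complex.exp (Complex.I * (β : ℂ) * (Real.pi : ℂ) / 2)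
        * Complex.exp (-(Complex.I * (β : ℂ) * (Real.pi : ℂ) / 2)) = 1 := by
      rw [← Complex.exp_add, add_neg_cancel, Complex.exp_zero]
    calc ((hbar ^ β : ℝ) : ℂ) * Complex.exp (Complex.I * (β : ℂ) * (Real.pi : ℂ) / 2) *
          (((hbar ^ (-β) : ℝ) : ℂ) *
            Complex.exp (-(Complex.I * (β : ℂ) * (Real.pi : ℂ) / 2)) * (E : ℂ) * f t)
        = (((hbar ^ β : ℝ) : ℂ) * ((hbar ^ (-β) : ℝ) : ℂ)) *
            (Complex.exp (Complex.I * (β : ℂ) * (Real.pi : ℂ) / 2) *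
              Complex.exp (-(Complex.I * (β : ℂ) * (Real.pi : ℂ) / 2))) * ((E : ℂ) * f t) := by
          ring
      _ = (E : ℂ) * f t := by rw [h1, h2]; ring
end

section
/- Let 2/3<β<1, ℏ>0, E<0 (E real), t∈ℝ. Set ρ = ℏ^{−β} e^{−iβπ/2} E and s₀ = |E|^{1/β} ℏ^{−1} e^{i(π/β − π/2)}. Then π/β − π/2 ∈ (π/2, π) (so s₀ is in the principal branch domain), s₀^β = ρ (principal power), and lim_{s→s₀} (s − s₀) s^{β−1} e^{st}/(s^β − ρ) = (1/β) exp(−i t |E|^{1/β} e^{iπ/β}/ℏ), where the limit is over s∈ℂ∖{s₀} and s^β, s^{β−1} are principal powers. -/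
open Complex Real Filter Set

theorem residue_at_pole_negative_energy_large_beta
    (β hbar E t : ℝ) (hβ0 : 2 / 3 < β) (hβ1 : β < 1) (hh : 0 < hbar) (hE : E < 0) :
    let ρ : ℂ := ((hbar ^ (-β) : ℝ) : ℂ) *
      Complex.exp (-(Complex.I * (β : ℂ) * (Real.pi : ℂ) / 2)) * (E : ℂ)
    let s₀ : ℂ := ((|E| ^ (1 / β) : ℝ) : ℂ) / (hbar : ℂ) *
      Complex.exp (Complex.I * ((Real.pi / β - Real.pi / 2 : ℝ) : ℂ))
    Real.pi / β - Real.pi / 2 ∈ Set.Ioo (Real.pi / 2) Real.pi ∧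
    s₀ ^ (β : ℂ) = ρ ∧
    Filter.Tendsto
      (fun s : ℂ => (s - s₀) * s ^ ((β : ℂ) - 1) * Complex.exp (s * (t : ℂ)) /
        (s ^ (β : ℂ) - ρ))
      (nhdsWithin s₀ {s₀}ᶜ)
      (nhds ((1 / (β : ℂ)) *
        Complex.exp (-(Complex.I * (t : ℂ) * ((|E| ^ (1 / β) : ℝ) : ℂ) *
          Complex.exp (Complex.I * (Real.pi : ℂ) / (β : ℂ)) / (hbar : ℂ))))) := by
  intro ρ s₀
  have hπ := Real.pi_pos
  have hβpos : 0 < β := by linarith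
  have hβC : (β : ℂ) ≠ 0 := by exact_mod_cast hβpos.ne'
  set θ : ℝ := Real.pi / β - Real.pi / 2 with hθdef
  have hθ1 : Real.pi / 2 < θ := by
    have h1 : Real.pi < Real.pi / β := by
      rw [lt_div_iff₀ hβpos]; nlinarith
    simp only [hθdef]; linarith
  have hθ2 : θ < Real.pi := by
    have h1 : Real.pi / β < 3 * Real.pi / 2 := by
      rw [div_lt_iff₀ hβpos]; nlinarith
    simp only [hθdef]; linarith
  have hEabs : 0 < |E| := abs_pos.mpr hE.ne
  have hr' : (0:ℝ) < |E| ^ (1 / β) := Real.rpow_pos_of_pos hEabs _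
  set r : ℝ := |E| ^ (1 / β) / hbar with hrdef
  have hr : 0 < r := div_pos hr' hh
  have key : Complex.I * ((Real.pi / β - Real.pi / 2 : ℝ) : ℂ) = (θ : ℂ) * I := by
    rw [hθdef]; ring
  have hs₀ : s₀ = (r : ℂ) * Complex.exp ((θ:ℂ) * I) := by
    simp only [s₀, key, hrdef]
    push_cast
    ring
  have hθIoo : Real.pi / 2 < θ ∧ θ < Real.pi := ⟨hθ1, hθ2⟩
  have hθIoc : θ ∈ Set.Ioc (-Real.pi) Real.pi := ⟨((by linarith : (-Real.pi:ℝ) < Real.pi/2).trans hθ1), hθ2.le⟩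
  have harg : s₀.arg = θ := by
    rw [hs₀, Complex.exp_mul_I]
    exact Complex.arg_mul_cos_add_sin_mul_I hr hθIoc
  have habs : ‖s₀‖ = r := by
    rw [hs₀, norm_mul, Complex.norm_real, Real.norm_of_nonneg hr.le, Complex.norm_exp]
    simp
  have hs₀ne : s₀ ≠ 0 := by
    rw [hs₀]
    exact mul_ne_zero (by exact_mod_cast hr.ne') (Complex.exp_ne_zero _)
  have hslit : s₀ ∈ Complex.slitPlane := by
    rw [Complex.mem_slitPlane_iff_arg, harg]
    exact ⟨hθ2.ne, hs₀ne⟩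
  have hlog : Complex.log s₀ = (Real.log r : ℂ) + (θ : ℂ) * I := by
    rw [Complex.log, habs, harg]
  have hrβ : r ^ β = |E| * hbar ^ (-β) := by
    rw [hrdef, Real.div_rpow hr'.le hh.le, ← Real.rpow_mul hEabs.le,
      one_div_mul_cancel hβpos.ne', Real.rpow_one, Real.rpow_neg hh.le, div_eq_mul_inv]
  have h3 : β * θ = Real.pi - β * Real.pi / 2 := by
    rw [hθdef]; field_simp
  -- part 2 : s₀ ^ β = ρ
  have hpow : s₀ ^ (β : ℂ) = ρ := by
    rw [Complex.cpow_def_of_ne_zero hs₀ne, hlog]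
    have h1 : ((Real.log r : ℂ) + (θ : ℂ) * I) * (β:ℂ)
        = ((β * Real.log r : ℝ) : ℂ) + ((β * θ : ℝ) : ℂ) * I := by push_cast; ring
    rw [h1, Complex.exp_add]
    have h2 : Complex.exp ((β * Real.log r : ℝ) : ℂ) = ((r ^ β : ℝ) : ℂ) := by
      rw [← Complex.ofReal_exp]
      norm_cast
      rw [Real.rpow_def_of_pos hr, mul_comm]
    have h4 : Complex.exp (((β * θ : ℝ) : ℂ) * I)
        = - Complex.exp (-(Complex.I * (β : ℂ) * (Real.pi : ℂ) / 2)) := by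
      rw [h3]
      push_cast
      rw [show ((Real.pi:ℂ) - β * Real.pi / 2) * I
          = Real.pi * I + (-(Complex.I * (β : ℂ) * (Real.pi : ℂ) / 2)) by ring,
        Complex.exp_add, Complex.exp_pi_mul_I]
      ring
    rw [h2, h4, hrβ]
    have hEc : (E : ℂ) = -((|E| : ℝ) : ℂ) := by
      norm_cast; rw [abs_of_neg hE]; ring
    simp only [ρ, hEc]
    push_cast
    ring
  refine ⟨hθIoo, hpow, ?_⟩
  -- part 3
  have hd : HasDerivAt (fun z : ℂ => z ^ (β:ℂ)) ((β:ℂ) * s₀ ^ ((β:ℂ) - 1)) s₀ :=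
    (Complex.hasStrictDerivAt_cpow_const hslit).hasDerivAt
  have hcne : s₀ ^ ((β:ℂ) - 1) ≠ 0 := by
    simp [Complex.cpow_eq_zero_iff, hs₀ne]
  have hden_ne : (β:ℂ) * s₀ ^ ((β:ℂ) - 1) ≠ 0 := mul_ne_zero hβC hcne
  have hslope : Tendsto (fun s : ℂ => (s ^ (β:ℂ) - ρ) / (s - s₀)) (nhdsWithin s₀ {s₀}ᶜ)
      (nhds ((β:ℂ) * s₀ ^ ((β:ℂ) - 1))) := by
    have h := hasDerivAt_iff_tendsto_slope.mp hd
    exact Filter.Tendsto.congr (fun s => by simp [slope_def_field, hpow]) h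
  have hnum : Tendsto (fun s : ℂ => s ^ ((β:ℂ) - 1) * Complex.exp (s * (t:ℂ)))
      (nhdsWithin s₀ {s₀}ᶜ)
      (nhds (s₀ ^ ((β:ℂ) - 1) * Complex.exp (s₀ * (t:ℂ)))) := by
    apply Filter.Tendsto.mono_left _ nhdsWithin_le_nhds
    exact ((continuousAt_cpow_const hslit).mul
      ((Complex.continuous_exp.continuousAt).comp
        ((continuous_id.mul continuous_const).continuousAt))).tendsto
  have hdiv := hnum.div hslope hden_ne
  have heq : ∀ s : ℂ, (s ^ ((β:ℂ) - 1) * Complex.exp (s * (t:ℂ))) /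
        ((s ^ (β:ℂ) - ρ) / (s - s₀))
      = (s - s₀) * s ^ ((β : ℂ) - 1) * Complex.exp (s * (t : ℂ)) /
        (s ^ (β : ℂ) - ρ) := by
    intro s
    rw [div_div_eq_mul_div]
    ring
  -- the exponent identity
  have hexp : Complex.exp (s₀ * (t:ℂ)) =
      Complex.exp (-(Complex.I * (t : ℂ) * ((|E| ^ (1 / β) : ℝ) : ℂ) *
        Complex.exp (Complex.I * (Real.pi : ℂ) / (β : ℂ)) / (hbar : ℂ))) := by
    congr 1
    have hθsplit : (θ:ℂ) * I = Complex.I * (Real.pi : ℂ) / (β : ℂ)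
        + (-(((Real.pi/2 : ℝ):ℂ) * I)) := by
      rw [hθdef]; push_cast; ring
    have hexpI : Complex.exp (-(((Real.pi/2 : ℝ):ℂ) * I)) = -I := by
      rw [Complex.exp_neg, Complex.exp_mul_I]
      push_cast
      rw [Complex.cos_pi_div_two, Complex.sin_pi_div_two]
      simp [Complex.inv_I]
    rw [hs₀, hθsplit, Complex.exp_add, hexpI, hrdef]
    push_cast
    have hhC : (hbar : ℂ) ≠ 0 := by exact_mod_cast hh.ne'
    ring
  have hval : s₀ ^ ((β:ℂ) - 1) * Complex.exp (s₀ * (t:ℂ)) / ((β:ℂ) * s₀ ^ ((β:ℂ) - 1))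
      = (1 / (β : ℂ)) *
        Complex.exp (-(Complex.I * (t : ℂ) * ((|E| ^ (1 / β) : ℝ) : ℂ) *
          Complex.exp (Complex.I * (Real.pi : ℂ) / (β : ℂ)) / (hbar : ℂ))) := by
    rw [← hexp]
    field_simp
  rw [← hval]
  exact Filter.Tendsto.congr (fun s => by simpa using heq s) hdiv
end

section
/- Let 1<α≤2, let θ∈ℝ with 0≤θ≤2−α, and let s∈ℂ with 0 < Re(s) < 1. Then the (improper) oscillatory integral lim_{R→∞} ∫_0^R exp(−i e^{−iθπ/2} u^{α+1}) u^{−s} du exists and equals (1/(α+1)) Γ((1−s)/(α+1)) exp( −iπ(1−θ)(1−s)/(2(α+1)) ). -/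
open MeasureTheory intervalIntegral
open Set Filter Complex Topology


noncomputable def phiK (z b : ℂ) (t : ℝ) : ℂ := cexp (-(b * t)) * (t : ℂ) ^ (z - 1)

lemma phiK_meas (z b : ℂ) : Measurable (phiK z b) := by
  apply Measurable.mul
  · exact Complex.measurable_exp.comp ((measurable_const.mul Complex.measurable_ofReal).neg)
  · exact Complex.measurable_ofReal.pow measurable_const

lemma phiK_norm {z b : ℂ} {t : ℝ} (ht : 0 < t) :
    ‖phiK z b t‖ = Real.exp (-(b.re * t)) * t ^ (z.re - 1) := by
  rw [phiK, norm_mul, Complex.norm_exp,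
    Complex.norm_cpow_eq_rpow_re_of_pos ht]
  congr 2
  simp [Complex.sub_re]

lemma phiK_contOn (z b : ℂ) : ContinuousOn (phiK z b) (Ioi 0) := by
  intro t ht
  apply ContinuousAt.continuousWithinAt
  apply ContinuousAt.mul
  · exact (Complex.continuous_exp.comp ((continuous_const.mul Complex.continuous_ofReal).neg)).continuousAt
  · exact continuousAt_ofReal_cpow_const t _ (Or.inr (ne_of_gt ht))

lemma phiK_int_Ioc {z b : ℂ} (hz : 0 < z.re) (hb : 0 ≤ b.re) :
    IntegrableOn (phiK z b) (Ioc (0:ℝ) 1) := by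
  have hg : IntegrableOn (fun t : ℝ => t ^ (z.re - 1)) (Ioc (0:ℝ) 1) := by
    have := intervalIntegral.intervalIntegrable_rpow' (a := 0) (b := 1) (r := z.re - 1)
      (by linarith)
    rwa [intervalIntegrable_iff_integrableOn_Ioc_of_le zero_le_one] at this
  refine Integrable.mono' hg ((phiK_meas z b).aestronglyMeasurable) ?_
  filter_upwards [ae_restrict_mem measurableSet_Ioc] with t ht
  rw [phiK_norm ht.1]
  have h1 : Real.exp (-(b.re * t)) ≤ 1 := by
    rw [Real.exp_le_one_iff]
    nlinarith [ht.1.le]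
  nth_rewrite 2 [← one_mul (t ^ (z.re - 1))]
  exact mul_le_mul_of_nonneg_right h1 (Real.rpow_nonneg ht.1.le _)

lemma phiK2_int_Ioi {z b : ℂ} (hz : z.re < 1) (hb : 0 ≤ b.re) :
    IntegrableOn (phiK (z-1) b) (Ioi (1:ℝ)) := by
  have hg : IntegrableOn (fun t : ℝ => t ^ (z.re - 2)) (Ioi (1:ℝ)) :=
    integrableOn_Ioi_rpow_of_lt (by linarith) one_pos
  refine Integrable.mono' hg ((phiK_meas _ b).aestronglyMeasurable) ?_
  filter_upwards [ae_restrict_mem measurableSet_Ioi] with t ht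
  rw [phiK_norm (lt_trans one_pos ht)]
  have h1 : Real.exp (-(b.re * t)) ≤ 1 := by
    rw [Real.exp_le_one_iff]
    nlinarith [(lt_trans one_pos (mem_Ioi.mp ht)).le]
  have : (z - 1).re - 1 = z.re - 2 := by simp [Complex.sub_re]; ring
  rw [this]
  nth_rewrite 2 [← one_mul (t ^ (z.re - 2))]
  exact mul_le_mul_of_nonneg_right h1 (Real.rpow_nonneg (by linarith [(lt_trans one_pos (mem_Ioi.mp ht))]) _)

lemma phiK_int_Ioi {z b : ℂ} (hz : 0 < z.re) (hb : 0 < b.re) :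
    IntegrableOn (phiK z b) (Ioi (0:ℝ)) := by
  have hg : IntegrableOn (fun t : ℝ => t ^ (z.re - 1) * Real.exp (-b.re * t ^ (1:ℝ)))
      (Ioi (0:ℝ)) := integrableOn_rpow_mul_exp_neg_mul_rpow (by linarith) one_pos hb
  refine Integrable.mono' hg ((phiK_meas z b).aestronglyMeasurable) ?_
  filter_upwards [ae_restrict_mem measurableSet_Ioi] with t ht
  rw [phiK_norm ht, mul_comm]
  rw [Real.rpow_one]
  apply le_of_eq
  congr 1
  ring_nf


section
variable {z b : ℂ}

lemma phiK_intervalInt (hcont : ContinuousOn (phiK z b) (Ioi 0)) {R : ℝ} (hR : 1 ≤ R) :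
    IntervalIntegrable (phiK z b) volume 1 R :=
  (hcont.mono (fun t ht => lt_of_lt_of_le one_pos (Set.mem_Icc.mp (by
    rwa [Set.uIcc_of_le hR] at ht)).1)).intervalIntegrable

-- derivative of t ↦ (t:ℂ)^(z-1)
lemma hasDerivAt_cpow_aux (hz1 : z ≠ 1) {t : ℝ} (ht : t ≠ 0) :
    HasDerivAt (fun y : ℝ => (y : ℂ) ^ (z - 1)) ((z - 1) * (t : ℂ) ^ (z - 2)) t := by
  have h := hasDerivAt_ofReal_cpow_const' ht (r := z - 2) (by
    intro h; apply hz1; have : z - 2 + 1 = -1 + 1 := by rw [h]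
    simpa using by linear_combination this + (2:ℂ) - 1)
  have h2 := h.const_mul (z - 1)
  have hne : z - 1 ≠ 0 := sub_ne_zero.mpr hz1
  have : z - 2 + 1 = z - 1 := by ring
  rw [this] at h2
  rw [show (fun y : ℝ => (y:ℂ)^(z-1)) = fun y : ℝ => (z-1) * ((y:ℂ)^(z-1)/(z-1)) from
    funext fun y => by field_simp]
  exact h2

lemma hasDerivAt_expaux (b : ℂ) (hb : b ≠ 0) (t : ℝ) :
    HasDerivAt (fun y : ℝ => -(cexp (-(b * y)) / b)) (cexp (-(b * t))) t := by
  have h0 : HasDerivAt (fun y : ℝ => (y : ℂ)) 1 t := Complex.ofRealCLM.hasDerivAt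
  have h1 : HasDerivAt (fun y : ℝ => -(b * (y:ℂ))) (-b) t := by
    have := (h0.const_mul b).neg; rw [mul_one] at this; exact this
  have h2 := (h1.cexp).div_const b
  have h3 := h2.neg
  convert (show HasDerivAt (fun y : ℝ => -(cexp (-(b * y)) / b)) (-(cexp (-(b * t)) * -b / b)) t
    from h3) using 1
  rw [mul_neg, neg_div, neg_neg, mul_div_assoc, div_self hb, mul_one]
end

noncomputable def PhiLim (z b : ℂ) : ℂ :=
  (∫ t in (0:ℝ)..1, phiK z b t) + cexp (-b) / b
    + ((z - 1) / b) * ∫ t in Ioi (1:ℝ), phiK (z - 1) b t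

section
variable {z b : ℂ}

lemma phiK_ibp (hz1 : z.re < 1) (hb : b ≠ 0) {R : ℝ} (hR : 1 ≤ R) :
    ∫ t in (1:ℝ)..R, phiK z b t
      = -((R:ℂ) ^ (z-1) * cexp (-(b * R)) / b) + cexp (-b) / b
        + ((z - 1) / b) * ∫ t in (1:ℝ)..R, phiK (z-1) b t := by
  have hzne : z ≠ 1 := fun h => by simp [h] at hz1
  have hu : ∀ t ∈ uIcc (1:ℝ) R, HasDerivAt (fun y : ℝ => (y : ℂ) ^ (z - 1))
      ((z - 1) * (t : ℂ) ^ (z - 2)) t := by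
    intro t ht
    rw [uIcc_of_le hR] at ht
    exact hasDerivAt_cpow_aux hzne (by linarith [ht.1])
  have hv : ∀ t ∈ uIcc (1:ℝ) R, HasDerivAt (fun y : ℝ => -(cexp (-(b * y)) / b))
      (cexp (-(b * t))) t := fun t _ => hasDerivAt_expaux b hb t
  have hcpow : ∀ (w : ℂ), ContinuousOn (fun t : ℝ => (t:ℂ) ^ w) (uIcc 1 R) := by
    intro w t ht
    rw [uIcc_of_le hR] at ht
    exact (continuousAt_ofReal_cpow_const t _ (Or.inr (by linarith [ht.1]))).continuousWithinAt
  have hu' : IntervalIntegrable (fun t : ℝ => (z-1) * (t:ℂ)^(z-2)) volume 1 R :=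
    (continuousOn_const.mul (hcpow (z-2))).intervalIntegrable
  have hv' : IntervalIntegrable (fun t : ℝ => cexp (-(b * t))) volume 1 R :=
    ((Complex.continuous_exp.comp
      ((continuous_const.mul Complex.continuous_ofReal).neg))).continuousOn.intervalIntegrable
  have key := intervalIntegral.integral_mul_deriv_eq_deriv_mul hu hv hu' hv'
  have e1 : ∀ t : ℝ, phiK z b t = (t:ℂ)^(z-1) * cexp (-(b*t)) := fun t => mul_comm _ _
  calc ∫ t in (1:ℝ)..R, phiK z b t = ∫ t in (1:ℝ)..R, (t:ℂ)^(z-1) * cexp (-(b*t)) := by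
        simp_rw [e1]
    _ = (R:ℂ)^(z-1) * (-(cexp (-(b*R))/b)) - (1:ℂ)^(z-1) * (-(cexp (-(b*(1:ℝ)))/b))
        - ∫ t in (1:ℝ)..R, (z-1) * (t:ℂ)^(z-2) * (-(cexp (-(b*t))/b)) := key
    _ = _ := by
        rw [one_cpow]
        rw [show (∫ t in (1:ℝ)..R, (z-1) * (t:ℂ)^(z-2) * (-(cexp (-(b*t))/b)))
          = (-((z-1)/b)) * ∫ t in (1:ℝ)..R, phiK (z-1) b t from ?_]
        · push_cast
          ring
        · rw [← intervalIntegral.integral_const_mul]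
          congr 1 with t
          rw [phiK]
          have : z - 1 - 1 = z - 2 := by ring
          rw [this]
          field_simp

lemma tendsto_phiK_PhiLim (hz0 : 0 < z.re) (hz1 : z.re < 1) (hbre : 0 ≤ b.re) (hb : b ≠ 0) :
    Tendsto (fun R : ℝ => ∫ t in (0:ℝ)..R, phiK z b t) atTop (nhds (PhiLim z b)) := by
  have hint01 : IntervalIntegrable (phiK z b) volume 0 1 :=
    (intervalIntegrable_iff_integrableOn_Ioc_of_le zero_le_one).mpr (phiK_int_Ioc hz0 hbre)
  have h4 : Tendsto (fun R : ℝ => ∫ t in (1:ℝ)..R, phiK (z-1) b t) atTop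
      (nhds (∫ t in Ioi (1:ℝ), phiK (z-1) b t)) :=
    intervalIntegral_tendsto_integral_Ioi 1 (phiK2_int_Ioi hz1 hbre) tendsto_id
  have h2 : Tendsto (fun R : ℝ => -((R:ℂ)^(z-1) * cexp (-(b * R)) / b)) atTop (nhds 0) := by
    apply squeeze_zero_norm' (a := fun R : ℝ => R ^ (z.re - 1) / ‖b‖)
    · filter_upwards [eventually_ge_atTop (1:ℝ)] with R hR
      have hRpos : (0:ℝ) < R := by linarith
      rw [norm_neg, norm_div, norm_mul,
        Complex.norm_cpow_eq_rpow_re_of_pos hRpos, Complex.norm_exp]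
      have : Real.exp (-(b * R)).re ≤ 1 := by
        rw [Real.exp_le_one_iff]
        simp only [Complex.neg_re, Complex.mul_re, Complex.ofReal_re, Complex.ofReal_im,
          mul_zero, sub_zero, neg_nonpos]
        positivity
      have h5 : (z-1).re = z.re - 1 := by simp [Complex.sub_re]
      rw [h5, div_le_div_iff_of_pos_right (norm_pos_iff.mpr hb)]
      nth_rewrite 2 [← mul_one (R ^ (z.re - 1))]
      exact mul_le_mul_of_nonneg_left this (Real.rpow_nonneg hRpos.le _)
    · have := (tendsto_rpow_neg_atTop (y := 1 - z.re) (by linarith)).div_const ‖b‖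
      rw [zero_div] at this
      refine Filter.Tendsto.congr (fun R => ?_) this
      rw [show -(1 - z.re) = z.re - 1 by ring]
  have hsum : Tendsto (fun R : ℝ => (∫ t in (0:ℝ)..1, phiK z b t)
      + (-((R:ℂ)^(z-1) * cexp (-(b * R)) / b) + cexp (-b) / b
        + ((z - 1) / b) * ∫ t in (1:ℝ)..R, phiK (z-1) b t)) atTop (nhds (PhiLim z b)) := by
    have := (tendsto_const_nhds (x := ∫ t in (0:ℝ)..1, phiK z b t) (f := atTop (α := ℝ))).add
      (((h2.add (tendsto_const_nhds (x := cexp (-b)/b))).add (h4.const_mul ((z-1)/b))))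
    rw [show (∫ t in (0:ℝ)..1, phiK z b t) + (0 + cexp (-b)/b
      + ((z-1)/b) * ∫ t in Ioi (1:ℝ), phiK (z-1) b t) = PhiLim z b by rw [PhiLim]; ring] at this
    exact this.congr (by intro R; ring)
  refine hsum.congr' ?_
  filter_upwards [eventually_ge_atTop (1:ℝ)] with R hR
  rw [← phiK_ibp hz1 hb hR]
  exact intervalIntegral.integral_add_adjacent_intervals hint01
    (phiK_intervalInt (phiK_contOn z b) hR)
end



lemma phiK_integral_ofReal {z : ℂ} (hz0 : 0 < z.re) {r : ℝ} (hr : 0 < r) :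
    ∫ t in Ioi (0:ℝ), phiK z (r:ℂ) t = Complex.Gamma z * (r:ℂ) ^ (-z) := by
  have h := Complex.integral_cpow_mul_exp_neg_mul_Ioi (a := z) hz0 hr
  have h2 : ∫ t in Ioi (0:ℝ), phiK z (r:ℂ) t
      = ∫ (t : ℝ) in Ioi 0, (t:ℂ) ^ (z - 1) * cexp (-((r:ℂ) * (t:ℂ))) := by
    congr 1 with t
    rw [phiK, mul_comm]
  rw [h2, h, one_div, inv_cpow _ _ (by
      rw [Complex.arg_ofReal_of_nonneg hr.le]
      exact Real.pi_ne_zero.symm), ← Complex.cpow_neg, mul_comm]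

lemma phiK_integral_of_re_pos {z : ℂ} (hz0 : 0 < z.re) {w : ℂ} (hw : 0 < w.re) :
    ∫ t in Ioi (0:ℝ), phiK z w t = Complex.Gamma z * w ^ (-z) := by
  set U : Set ℂ := {c : ℂ | 0 < c.re} with hU
  have hUopen : IsOpen U := isOpen_lt continuous_const Complex.continuous_re
  have hFdiff : DifferentiableOn ℂ (fun c => ∫ t in Ioi (0:ℝ), phiK z c t) U := by
    intro w₀ hw₀
    apply DifferentiableAt.differentiableWithinAt
    have hw₀re : (0:ℝ) < w₀.re := hw₀
    have hεpos : 0 < w₀.re / 2 := by positivity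
    have main := hasDerivAt_integral_of_dominated_loc_of_deriv_le
      (μ := volume.restrict (Ioi 0)) (F := fun (x : ℂ) (t : ℝ) => phiK z x t)
      (F' := fun (x : ℂ) (t : ℝ) => cexp (-(x * t)) * -(t:ℂ) * (t:ℂ) ^ (z-1))
      (x₀ := w₀) (bound := fun t : ℝ => t ^ z.re * Real.exp (-(w₀.re / 2 * t)))
      (Metric.ball_mem_nhds w₀ hεpos) (Eventually.of_forall (fun x => (phiK_meas z x).aestronglyMeasurable))
      (phiK_int_Ioi hz0 hw₀re) ?_ ?_ ?_ ?_
    · exact main.2.differentiableAt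
    · -- measurability of F' w₀
      apply Measurable.aestronglyMeasurable
      exact ((Complex.measurable_exp.comp
        ((measurable_const.mul Complex.measurable_ofReal).neg)).mul
        Complex.measurable_ofReal.neg).mul (Complex.measurable_ofReal.pow measurable_const)
    · -- bound
      filter_upwards [ae_restrict_mem measurableSet_Ioi] with t ht x hx
      have htpos : (0:ℝ) < t := ht
      have hxre : w₀.re / 2 ≤ x.re := by
        have := Complex.abs_re_le_norm (x - w₀)
        rw [Complex.sub_re] at this
        have h3 : ‖x - w₀‖ < w₀.re / 2 := by
          rwa [Metric.mem_ball, Complex.dist_eq] at hx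
        have := abs_le.mp (le_of_lt (lt_of_le_of_lt this h3))
        linarith [this.1]
      rw [norm_mul, norm_mul,
        Complex.norm_exp, Complex.norm_cpow_eq_rpow_re_of_pos htpos, norm_neg,
        Complex.norm_real, Real.norm_eq_abs, abs_of_pos htpos]
      have e1 : (-(x * t)).re = -(x.re * t) := by
        simp [Complex.mul_re]
      rw [e1]
      have e2 : (z - 1).re = z.re - 1 := by simp [Complex.sub_re]
      rw [e2]
      have e3 : Real.exp (-(x.re * t)) * t * t ^ (z.re - 1)
          = t ^ z.re * Real.exp (-(x.re * t)) := by
        have h9 : t * t ^ (z.re - 1) = t ^ z.re := by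
          nth_rewrite 1 [← Real.rpow_one t]
          rw [← Real.rpow_add htpos]
          norm_num
        rw [mul_assoc, h9, mul_comm]
      rw [e3]
      gcongr
    · -- bound integrable
      have := integrableOn_rpow_mul_exp_neg_mul_rpow (s := z.re) (p := 1)
        (by linarith) one_pos hεpos
      refine this.congr_fun (fun t ht => ?_) measurableSet_Ioi
      simp only [Real.rpow_one]
      ring_nf
    · -- differentiability in x
      filter_upwards with t x _
      have h1 : HasDerivAt (fun x : ℂ => -(x * (t:ℂ))) (-(t:ℂ)) x := by
        have := ((hasDerivAt_id x).mul_const (t:ℂ)).neg; rw [one_mul] at this; exact this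
      have h2 := (h1.cexp).mul_const ((t:ℂ) ^ (z - 1))
      simpa [phiK] using h2
  have hGdiff : DifferentiableOn ℂ (fun c : ℂ => Complex.Gamma z * c ^ (-z)) U := by
    intro c hc
    exact (((differentiableAt_id.cpow (differentiableAt_const _)
      (Complex.mem_slitPlane_iff.mpr (Or.inl hc)))).const_mul _).differentiableWithinAt
  have hEq := AnalyticOnNhd.eqOn_of_preconnected_of_frequently_eq
    (hFdiff.analyticOnNhd hUopen) (hGdiff.analyticOnNhd hUopen)
    (convex_halfSpace_re_gt 0).isPreconnected (z₀ := 1) (by simp [hU])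
    ?_
  · exact hEq hw
  · -- frequently equal near 1
    have htend : Tendsto (fun n : ℕ => ((1 + ((n:ℝ)+1)⁻¹ : ℝ) : ℂ)) atTop (𝓝[≠] (1:ℂ)) := by
      apply tendsto_nhdsWithin_of_tendsto_nhds_of_eventually_within
      · have : Tendsto (fun n : ℕ => (1 + ((n:ℝ)+1)⁻¹ : ℝ)) atTop (𝓝 1) := by
          have := tendsto_one_div_add_atTop_nhds_zero_nat (𝕜 := ℝ)
          simp only [one_div] at this
          simpa using (tendsto_const_nhds (x := (1:ℝ))).add this
        have h7 := Complex.continuous_ofReal.continuousAt.tendsto.comp this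
        rw [show ((1:ℂ)) = ((1:ℝ):ℂ) by norm_num]
        exact h7
      · filter_upwards with n
        simp only [mem_compl_iff, mem_singleton_iff]
        intro h
        have h8 : (1 + ((n:ℝ)+1)⁻¹ : ℝ) = 1 := by exact_mod_cast h
        have h9 : (0:ℝ) < ((n:ℝ)+1)⁻¹ := by positivity
        linarith
    refine htend.frequently (Frequently.of_forall (fun n => ?_))
    have hrpos : (0:ℝ) < 1 + ((n:ℝ)+1)⁻¹ := by positivity
    exact phiK_integral_ofReal hz0 hrpos


section
variable {z b : ℂ}

set_option maxHeartbeats 2000000 in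
lemma philim_eq (hz0 : 0 < z.re) (hz1 : z.re < 1) (hbre : 0 ≤ b.re) (hbim : 0 < b.im) :
    PhiLim z b = Complex.Gamma z * b ^ (-z) := by
  have hb : b ≠ 0 := fun h => by simp [h] at hbim
  set u : ℕ → ℂ := fun n => b + (((n:ℝ)+1)⁻¹ : ℝ) with hu
  have hure : ∀ n, 0 < (u n).re := by
    intro n
    have : (0:ℝ) < ((n:ℝ)+1)⁻¹ := by positivity
    simp only [hu, Complex.add_re, Complex.ofReal_re]
    linarith
  have huim : ∀ n, (u n).im = b.im := by
    intro n; simp [hu]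
  have hune : ∀ n, u n ≠ 0 := fun n h => by
    have := hure n; rw [h] at this; simp at this
  have hulim : Tendsto u atTop (𝓝 b) := by
    have h1 : Tendsto (fun n : ℕ => (((n:ℝ)+1)⁻¹ : ℝ)) atTop (𝓝 0) := by
      have := tendsto_one_div_add_atTop_nhds_zero_nat (𝕜 := ℝ)
      simpa only [one_div] using this
    have h2 := (Complex.continuous_ofReal.continuousAt.tendsto.comp h1)
    have h3 : Tendsto (fun n : ℕ => b + ((((n:ℝ)+1)⁻¹ : ℝ) : ℂ)) atTop (𝓝 (b + ((0:ℝ):ℂ))) :=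
      (tendsto_const_nhds (x := b) (f := atTop (α := ℕ))).add h2
    rw [Complex.ofReal_zero, add_zero] at h3
    exact h3
  -- each u n value
  have huval : ∀ n, PhiLim z (u n) = Complex.Gamma z * (u n) ^ (-z) := by
    intro n
    have h1 := tendsto_phiK_PhiLim hz0 hz1 (hure n).le (hune n)
    have h2 : Tendsto (fun R : ℝ => ∫ t in (0:ℝ)..R, phiK z (u n) t) atTop
        (𝓝 (∫ t in Ioi (0:ℝ), phiK z (u n) t)) :=
      intervalIntegral_tendsto_integral_Ioi 0 (phiK_int_Ioi hz0 (hure n)) tendsto_id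
    rw [← phiK_integral_of_re_pos hz0 (hure n)]
    exact tendsto_nhds_unique h1 h2
  -- continuity of each term of PhiLim along u
  have hbound1 : IntegrableOn (fun t : ℝ => t ^ (z.re - 1)) (Ioc (0:ℝ) 1) := by
    have := intervalIntegral.intervalIntegrable_rpow' (a := 0) (b := 1) (r := z.re - 1)
      (by linarith)
    rwa [intervalIntegrable_iff_integrableOn_Ioc_of_le zero_le_one] at this
  have hbound2 : IntegrableOn (fun t : ℝ => t ^ (z.re - 2)) (Ioi (1:ℝ)) :=
    integrableOn_Ioi_rpow_of_lt (by linarith) one_pos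
  have hcexp_cont : ∀ t : ℝ, Continuous (fun c : ℂ => cexp (-(c * t)) ) :=
    fun t => Complex.continuous_exp.comp ((continuous_id.mul continuous_const).neg)
  have hT1 : Tendsto (fun n => ∫ t in (0:ℝ)..1, phiK z (u n) t) atTop
      (𝓝 (∫ t in (0:ℝ)..1, phiK z b t)) := by
    simp_rw [intervalIntegral.integral_of_le zero_le_one]
    apply tendsto_integral_of_dominated_convergence (fun t : ℝ => t ^ (z.re - 1))
      (fun n => (phiK_meas z (u n)).aestronglyMeasurable) hbound1
    · intro n
      filter_upwards [ae_restrict_mem measurableSet_Ioc] with t ht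
      rw [phiK_norm ht.1]
      have h1 : Real.exp (-((u n).re * t)) ≤ 1 := by
        rw [Real.exp_le_one_iff]
        nlinarith [ht.1.le, (hure n).le]
      nth_rewrite 2 [← one_mul (t ^ (z.re - 1))]
      exact mul_le_mul_of_nonneg_right h1 (Real.rpow_nonneg ht.1.le _)
    · filter_upwards [ae_restrict_mem measurableSet_Ioc] with t _
      simp only [phiK]
      exact (((hcexp_cont t).tendsto b).comp hulim).mul_const _
  have hT2 : Tendsto (fun n => cexp (-(u n)) / (u n)) atTop (𝓝 (cexp (-b) / b)) :=
    ((Complex.continuous_exp.tendsto (-b)).comp hulim.neg).div hulim hb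
  have hT3 : Tendsto (fun n => ∫ t in Ioi (1:ℝ), phiK (z-1) (u n) t) atTop
      (𝓝 (∫ t in Ioi (1:ℝ), phiK (z-1) b t)) := by
    apply tendsto_integral_of_dominated_convergence (fun t : ℝ => t ^ (z.re - 2))
      (fun n => (phiK_meas (z-1) (u n)).aestronglyMeasurable) hbound2
    · intro n
      filter_upwards [ae_restrict_mem measurableSet_Ioi] with t ht
      have htpos : (0:ℝ) < t := lt_trans one_pos ht
      rw [phiK_norm htpos]
      have h1 : Real.exp (-((u n).re * t)) ≤ 1 := by
        rw [Real.exp_le_one_iff]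
        nlinarith [htpos.le, (hure n).le]
      have h5 : (z - 1).re - 1 = z.re - 2 := by simp [Complex.sub_re]; ring
      rw [h5]
      nth_rewrite 2 [← one_mul (t ^ (z.re - 2))]
      exact mul_le_mul_of_nonneg_right h1 (Real.rpow_nonneg htpos.le _)
    · filter_upwards [ae_restrict_mem measurableSet_Ioi] with t _
      simp only [phiK]
      exact (((hcexp_cont t).tendsto b).comp hulim).mul_const _
  have hPhi : Tendsto (fun n => PhiLim z (u n)) atTop (𝓝 (PhiLim z b)) := by
    unfold PhiLim
    have hcoef : Tendsto (fun n => (z - 1) / u n) atTop (𝓝 ((z - 1) / b)) :=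
      tendsto_const_nhds.div hulim hb
    exact (hT1.add hT2).add (hcoef.mul hT3)
  have hG : Tendsto (fun n => Complex.Gamma z * (u n) ^ (-z)) atTop
      (𝓝 (Complex.Gamma z * b ^ (-z))) := by
    refine Tendsto.const_mul _ ?_
    exact ((continuousAt_cpow_const
      (Complex.mem_slitPlane_iff.mpr (Or.inr hbim.ne'))).tendsto).comp hulim
  refine tendsto_nhds_unique ?_ hG
  exact hPhi.congr (fun n => huval n)

lemma tendsto_phiK_Gamma (hz0 : 0 < z.re) (hz1 : z.re < 1) (hbre : 0 ≤ b.re) (hbim : 0 < b.im) :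
    Tendsto (fun R : ℝ => ∫ t in (0:ℝ)..R, phiK z b t) atTop
      (𝓝 (Complex.Gamma z * b ^ (-z))) := by
  rw [← philim_eq hz0 hz1 hbre hbim]
  exact tendsto_phiK_PhiLim hz0 hz1 hbre (fun h => by simp [h] at hbim)
end



theorem oscillatory_integral_phi2
    (α θ : ℝ) (hα1 : 1 < α) (hα2 : α ≤ 2) (hθ0 : 0 ≤ θ) (hθ1 : θ ≤ 2 - α)
    (s : ℂ) (hs0 : 0 < s.re) (hs1 : s.re < 1) :
    Filter.Tendsto
      (fun R : ℝ => ∫ u in (0 : ℝ)..R,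
        Complex.exp (-(Complex.I * Complex.exp (-(Complex.I * (θ : ℂ) * (Real.pi : ℂ) / 2)) *
          ((u ^ (α + 1) : ℝ) : ℂ))) * (u : ℂ) ^ (-s))
      Filter.atTop
      (nhds ((1 / ((α : ℂ) + 1)) * Complex.Gamma ((1 - s) / ((α : ℂ) + 1)) *
        Complex.exp (-(Complex.I * (Real.pi : ℂ) * (1 - (θ : ℂ)) * (1 - s) /
          (2 * ((α : ℂ) + 1)))))) := by
  have hπ := Real.pi_pos
  set φ : ℝ := Real.pi * (1 - θ) / 2 with hφ
  have hφ0 : 0 < φ := by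
    rw [hφ]
    have : 0 < 1 - θ := by linarith
    positivity
  have hφπ : φ ≤ Real.pi / 2 := by
    rw [hφ]
    nlinarith
  set b : ℂ := Complex.I * Complex.exp (-(Complex.I * (θ : ℂ) * (Real.pi : ℂ) / 2)) with hbdef
  have hb_eq : b = cexp ((φ : ℂ) * Complex.I) := by
    have hI : Complex.I = cexp (((Real.pi / 2 : ℝ) : ℂ) * Complex.I) := by
      rw [Complex.exp_mul_I]
      simp [Complex.cos_ofReal_re, ← Complex.ofReal_cos, ← Complex.ofReal_sin]
    rw [hbdef]
    nth_rewrite 1 [hI]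
    rw [← Complex.exp_add]
    congr 1
    push_cast [hφ]
    ring
  have hbre : 0 ≤ b.re := by
    rw [hb_eq, Complex.exp_ofReal_mul_I_re]
    apply Real.cos_nonneg_of_mem_Icc
    constructor <;> [linarith; linarith]
  have hbim : 0 < b.im := by
    rw [hb_eq, Complex.exp_ofReal_mul_I_im]
    apply Real.sin_pos_of_pos_of_lt_pi hφ0
    linarith
  have hb0 : b ≠ 0 := fun h => by simp [h] at hbim
  have hα1C : ((α : ℂ) + 1) ≠ 0 := by
    intro h
    have : ((α : ℂ) + 1).re = 0 := by rw [h]; simp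
    simp only [Complex.add_re, Complex.ofReal_re, Complex.one_re] at this
    linarith
  set z : ℂ := (1 - s) / ((α : ℂ) + 1) with hzdef
  have hzalt : z = (((α + 1)⁻¹ : ℝ) : ℂ) * (1 - s) := by
    rw [hzdef, div_eq_mul_inv, mul_comm]
    congr 1
    push_cast
    ring
  have hzre : z.re = (α + 1)⁻¹ * (1 - s.re) := by
    rw [hzalt, Complex.re_ofReal_mul]
    simp [Complex.sub_re]
  have hz0 : 0 < z.re := by
    rw [hzre]
    have h1 : (0:ℝ) < (α+1)⁻¹ := by positivity
    nlinarith
  have hz1 : z.re < 1 := by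
    rw [hzre]
    rw [inv_mul_lt_iff₀ (by positivity)]
    nlinarith
  -- value identity
  have hval : (1 / ((α : ℂ) + 1)) * Complex.Gamma ((1 - s) / ((α : ℂ) + 1)) *
        Complex.exp (-(Complex.I * (Real.pi : ℂ) * (1 - (θ : ℂ)) * (1 - s) /
          (2 * ((α : ℂ) + 1))))
      = ((α : ℂ) + 1)⁻¹ * (Complex.Gamma z * b ^ (-z)) := by
    have hbz : b ^ (-z) = cexp (((φ : ℂ) * Complex.I) * (-z)) := by
      rw [hb_eq, Complex.cpow_def_of_ne_zero (by rw [← hb_eq]; exact hb0),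
        Complex.log_exp]
      · simp [Complex.mul_im]; linarith
      · simp [Complex.mul_im]; linarith
    rw [hbz, ← hzdef]
    rw [show ((φ : ℂ) * Complex.I) * (-z)
        = -(Complex.I * (Real.pi : ℂ) * (1 - (θ : ℂ)) * (1 - s) / (2 * ((α : ℂ) + 1))) from ?_]
    · ring
    · rw [hzdef]
      push_cast [hφ]
      field_simp
  rw [hval]
  -- the substitution identity
  have hsubst : ∀ R : ℝ, 0 < R →
      (∫ u in (0 : ℝ)..R, cexp (-(b * ((u ^ (α + 1) : ℝ) : ℂ))) * (u : ℂ) ^ (-s))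
        = ((α : ℂ) + 1)⁻¹ * ∫ t in (0:ℝ)..(R ^ (α + 1)), phiK z b t := by
    intro R hR
    have hα10 : (0:ℝ) < α + 1 := by linarith
    have himg : (fun u : ℝ => u ^ (α + 1)) '' Ioc 0 R = Ioc 0 (R ^ (α + 1)) := by
      ext t
      constructor
      · rintro ⟨u, ⟨hu0, huR⟩, rfl⟩
        exact ⟨Real.rpow_pos_of_pos hu0 _, Real.rpow_le_rpow hu0.le huR hα10.le⟩
      · rintro ⟨ht0, htR⟩
        refine ⟨t ^ (α + 1)⁻¹, ⟨Real.rpow_pos_of_pos ht0 _, ?_⟩, ?_⟩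
        · calc t ^ (α + 1)⁻¹ ≤ (R ^ (α + 1)) ^ (α + 1)⁻¹ :=
                Real.rpow_le_rpow ht0.le htR (by positivity)
            _ = R := Real.rpow_rpow_inv (le_of_lt hR) hα10.ne'
        · exact Real.rpow_inv_rpow ht0.le hα10.ne'
    have hderiv : ∀ u ∈ Ioc (0:ℝ) R, HasDerivWithinAt (fun u : ℝ => u ^ (α + 1))
        ((α + 1) * u ^ α) (Ioc (0:ℝ) R) u := by
      intro u hu
      have := Real.hasDerivAt_rpow_const (x := u) (p := α + 1) (Or.inl hu.1.ne')
      rw [show α + 1 - 1 = α by ring] at this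
      exact this.hasDerivWithinAt
    have hinj : InjOn (fun u : ℝ => u ^ (α + 1)) (Ioc (0:ℝ) R) := by
      intro x hx y hy hxy
      have := congrArg (fun w : ℝ => w ^ (α+1)⁻¹) hxy
      simpa [Real.rpow_rpow_inv hx.1.le hα10.ne', Real.rpow_rpow_inv hy.1.le hα10.ne']
        using this
    have key := integral_image_eq_integral_abs_deriv_smul measurableSet_Ioc hderiv hinj
      (phiK z b)
    rw [himg] at key
    rw [intervalIntegral.integral_of_le hR.le,
      intervalIntegral.integral_of_le (by positivity : (0:ℝ) ≤ R ^ (α+1)), key]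
    rw [show (∫ x in Ioc (0:ℝ) R, |(α+1) * x ^ α| • phiK z b (x ^ (α+1)))
        = ∫ x in Ioc (0:ℝ) R, ((α:ℂ)+1) * (cexp (-(b * ((x ^ (α+1) : ℝ):ℂ))) * (x:ℂ) ^ (-s))
        from ?_]
    · rw [MeasureTheory.integral_const_mul, inv_mul_cancel_left₀ hα1C]
    · apply MeasureTheory.setIntegral_congr_fun measurableSet_Ioc
      intro u hu
      have hu0 : (0:ℝ) < u := hu.1
      have habs : |(α + 1) * u ^ α| = (α + 1) * u ^ α := by
        apply abs_of_pos
        have := Real.rpow_pos_of_pos hu0 α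
        positivity
      have hcast : ((u ^ (α + 1) : ℝ) : ℂ) ^ (z - 1) = (u:ℂ) ^ (((α + 1 : ℝ) : ℂ) * (z - 1)) :=
        (Complex.cpow_mul_ofReal_nonneg hu0.le _ _).symm
      have hexpid : (((α + 1 : ℝ)) : ℂ) * (z - 1) = -s - (α : ℂ) := by
        rw [hzdef]
        push_cast
        field_simp
        ring
      have hsplit : ((u ^ α : ℝ) : ℂ) * (u:ℂ) ^ (-s - (α:ℂ)) = (u:ℂ) ^ (-s) := by
        rw [Complex.ofReal_cpow hu0.le, ← Complex.cpow_add _ _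
          (by exact_mod_cast hu0.ne' : (u:ℂ) ≠ 0)]
        congr 1
        ring
      show |(α + 1) * u ^ α| • phiK z b (u ^ (α+1))
        = ((α:ℂ)+1) * (cexp (-(b * ((u ^ (α+1) : ℝ):ℂ))) * (u:ℂ) ^ (-s))
      rw [habs, phiK, Complex.real_smul, hcast, hexpid, ← hsplit]
      push_cast
      ring
  -- now conclude
  have hcomp : Tendsto (fun R : ℝ => R ^ (α + 1)) atTop atTop :=
    tendsto_rpow_atTop (by linarith)
  have h0 := (tendsto_phiK_Gamma hz0 hz1 hbre hbim).comp hcomp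
  have h1 := h0.const_mul (((α : ℂ) + 1)⁻¹)
  refine h1.congr' ?_
  filter_upwards [eventually_gt_atTop (0:ℝ)] with R hR
  exact (hsubst R hR).symm
end

section
/- For every z∈ℂ: ∑_{n=0}^∞ (−z)^n / ( n! Γ(−n/2 + 1/2) ) = (1/√π) exp(−z²/4); that is, the Mainardi–Wright function M_ν of order ν = 1/2 is the Gaussian M_{1/2}(z) = (1/√π) e^{−z²/4}. -/
open Real in
lemma gamma_half_sub_aux (k : ℕ) :
    Real.Gamma (1 / 2 - k) =
      (-4 : ℝ) ^ k * k.factorial * Real.sqrt Real.pi / (2 * k).factorial := by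
  induction k with
  | zero => norm_num [Real.Gamma_one_half_eq]
  | succ k ih =>
    have hx : (1 / 2 - ((k : ℝ) + 1)) ≠ 0 := by
      intro h
      have : (k : ℝ) = -1/2 := by linarith
      have hk : (0:ℝ) ≤ k := Nat.cast_nonneg k
      linarith
    have h := Real.Gamma_add_one hx
    have harg : (1 / 2 - ((k : ℝ) + 1)) + 1 = 1 / 2 - k := by ring
    rw [harg, ih] at h
    have key : Real.Gamma (1 / 2 - ((k : ℝ) + 1)) =
        ((-4 : ℝ) ^ k * k.factorial * Real.sqrt Real.pi / (2 * k).factorial) /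
          (1 / 2 - ((k : ℝ) + 1)) := by
      rw [h, mul_div_cancel_left₀ _ hx]
    have hf1 : (((k + 1).factorial : ℕ) : ℝ) = ((k : ℝ) + 1) * k.factorial := by
      rw [Nat.factorial_succ]; push_cast; ring
    have hf2 : (((2 * (k + 1)).factorial : ℕ) : ℝ) =
        (2 * (k : ℝ) + 2) * ((2 * (k : ℝ) + 1) * (2 * k).factorial) := by
      have h21 : 2 * (k + 1) = (2 * k + 1) + 1 := by ring
      rw [h21, Nat.factorial_succ, Nat.factorial_succ]; push_cast; ring
    have hfac : ((2 * k).factorial : ℝ) ≠ 0 := Nat.cast_ne_zero.mpr (2 * k).factorial_ne_zero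
    rw [Nat.cast_add, Nat.cast_one, key, hf1, hf2, div_div,
      div_eq_div_iff (mul_ne_zero hfac hx) (by positivity)]
    ring

theorem mainardi_wright_half_eq_gaussian (z : ℂ) :
    ∑' n : ℕ, (-z) ^ n / ((n.factorial : ℂ) * (Real.Gamma (-(n : ℝ) / 2 + 1 / 2) : ℂ)) =
      (1 / (Real.sqrt Real.pi : ℂ)) * Complex.exp (-z ^ 2 / 4) := by
  set f : ℕ → ℂ := fun n =>
    (-z) ^ n / ((n.factorial : ℂ) * (Real.Gamma (-(n : ℝ) / 2 + 1 / 2) : ℂ)) with hf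
  have hodd : ∀ k : ℕ, f (2 * k + 1) = 0 := by
    intro k
    have harg : -((2 * k + 1 : ℕ) : ℝ) / 2 + 1 / 2 = -(k : ℝ) := by push_cast; ring
    simp only [hf]
    rw [harg, Real.Gamma_neg_nat_eq_zero]
    simp
  have heven : ∀ k : ℕ, f (2 * k) =
      (1 / (Real.sqrt Real.pi : ℂ)) * ((-z ^ 2 / 4) ^ k / (k.factorial : ℂ)) := by
    intro k
    have harg : -((2 * k : ℕ) : ℝ) / 2 + 1 / 2 = 1 / 2 - k := by push_cast; ring
    have hg := gamma_half_sub_aux k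
    have hfac2 : ((2 * k).factorial : ℂ) ≠ 0 := Nat.cast_ne_zero.mpr (2*k).factorial_ne_zero
    have hfack : ((k.factorial : ℂ)) ≠ 0 := Nat.cast_ne_zero.mpr k.factorial_ne_zero
    have hpi : (Real.sqrt Real.pi : ℂ) ≠ 0 := by
      simp [Complex.ofReal_ne_zero]
      positivity
    have hz : (-z) ^ (2 * k) = (z ^ 2) ^ k := by
      rw [pow_mul, neg_pow, even_two.neg_pow]
      ring
    have hd : (-z ^ 2 / 4 : ℂ) = z ^ 2 / (-4) := by ring
    have hneg : ((-4 : ℂ)) ^ k ≠ 0 := pow_ne_zero _ (by norm_num)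
    simp only [hf, harg, hg, hz, hd, div_pow]
    push_cast
    field_simp
  have hinj : Function.Injective (fun k : ℕ => 2 * k) := fun a b h => by
    have : 2 * a = 2 * b := h
    omega
  have hsupp : Function.support f ⊆ Set.range (fun k : ℕ => 2 * k) := by
    intro n hn
    rcases Nat.even_or_odd n with ⟨k, hk⟩ | ⟨k, hk⟩
    · exact ⟨k, show 2 * k = n by omega⟩
    · exact absurd (by rw [hk]; exact hodd k) hn
  calc ∑' n, f n = ∑' k, f (2 * k) := (hinj.tsum_eq hsupp).symm
    _ = ∑' k, (1 / (Real.sqrt Real.pi : ℂ)) * ((-z ^ 2 / 4) ^ k / (k.factorial : ℂ)) := by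
        simp only [heven]
    _ = (1 / (Real.sqrt Real.pi : ℂ)) * ∑' k, ((-z ^ 2 / 4) ^ k / (k.factorial : ℂ)) :=
        tsum_mul_left
    _ = (1 / (Real.sqrt Real.pi : ℂ)) * Complex.exp (-z ^ 2 / 4) := by
        rw [Complex.exp_eq_exp_ℂ, NormedSpace.exp_eq_tsum_div]
end
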